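/- Let S ≥ 1 and let H : [0,∞) → M_S(ℝ) be continuous with H(t) essentially nonnegative for every t ≥ 0, and let h^*(t) = max_{1≤j≤S} ∑_{i=1}^S H(t)_{ij}. Let x : [0,∞) → ℝ^S be differentiable with x'(t) = H(t)x(t) for all t ≥ 0. Then for every (not necessarily nonnegative) initial value x(0), ‖x(t)‖₁ ≤ exp(∫₀ᵗ h^*(τ) dτ) · ‖x(0)‖₁ for all t ≥ 0. -/

import Mathlib

open Set Filter Topology

/-- Right derivative of the absolute value of a function with a right derivative. -/
lemma abs_hasDerivWithinAt_Ici_aux {f : ℝ → ℝ} {f' t : ℝ}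
    (hf : HasDerivWithinAt f f' (Ici t) t) :
    ∃ d, HasDerivWithinAt (fun s => |f s|) d (Ici t) t ∧
      (0 < f t → d = f') ∧ (f t < 0 → d = -f') ∧ (f t = 0 → d = |f'|) := by
  rcases lt_trichotomy (f t) 0 with hneg | hzero | hpos
  · refine ⟨-f', ?_, fun h => absurd h (by linarith), fun _ => rfl,
      fun h => absurd h (by linarith)⟩
    have hev : ∀ᶠ s in 𝓝[Ici t] t, f s ∈ Iio (0 : ℝ) :=
      hf.continuousWithinAt (isOpen_Iio.mem_nhds hneg)
    refine hf.neg.congr_of_eventuallyEq ?_ (abs_of_neg hneg)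
    filter_upwards [hev] with s hs
    exact abs_of_neg hs
  · refine ⟨|f'|, ?_, fun h => absurd h (by linarith), fun h => absurd h (by linarith),
      fun _ => rfl⟩
    rw [hasDerivWithinAt_iff_isLittleO] at hf ⊢
    have hb : ∀ᶠ s in 𝓝[Ici t] t,
        ‖|f s| - |f t| - (s - t) • |f'|‖ ≤ 1 * ‖f s - f t - (s - t) • f'‖ := by
      filter_upwards [self_mem_nhdsWithin] with s hs
      have hst : (0 : ℝ) ≤ s - t := by simpa [sub_nonneg] using (mem_Ici.1 hs)
      have h1 : |(s - t) * f'| = (s - t) * |f'| := by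
        rw [abs_mul, abs_of_nonneg hst]
      have key := abs_abs_sub_abs_le_abs_sub (f s) ((s - t) * f')
      rw [h1] at key
      simpa [hzero, Real.norm_eq_abs, smul_eq_mul] using key
    exact (Asymptotics.IsBigO.of_bound 1 hb).trans_isLittleO hf
  · refine ⟨f', ?_, fun _ => rfl, fun h => absurd h (by linarith),
      fun h => absurd h (by linarith)⟩
    have hev : ∀ᶠ s in 𝓝[Ici t] t, f s ∈ Ioi (0 : ℝ) :=
      hf.continuousWithinAt (isOpen_Ioi.mem_nhds hpos)
    refine hf.congr_of_eventuallyEq ?_ (abs_of_pos hpos)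
    filter_upwards [hev] with s hs
    exact abs_of_pos hs

/-- Upper bound `‖x(t)‖₁ ≤ exp(∫₀ᵗ h*(τ) dτ) ‖x(0)‖₁` for solutions of
`x' = H(t)x` with essentially nonnegative `H(t)` and arbitrary initial
condition, where `h*(t)` is the largest column sum of `H(t)`. -/
theorem l1_upper_bound
    (S : ℕ) (hS : 1 ≤ S)
    (H : ℝ → Matrix (Fin S) (Fin S) ℝ)
    (hHcont : ∀ i j, ContinuousOn (fun t => H t i j) (Ici (0 : ℝ)))
    (hHess : ∀ t ∈ Ici (0 : ℝ), ∀ i j, i ≠ j → 0 ≤ H t i j)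
    (hstar : ℝ → ℝ)
    (hhstar : ∀ t, hstar t = ⨆ j, ∑ i, H t i j)
    (x : ℝ → Fin S → ℝ)
    (hx : ∀ t ∈ Ici (0 : ℝ), ∀ i,
      HasDerivWithinAt (fun s => x s i) ((H t).mulVec (x t) i) (Ici 0) t) :
    ∀ t ∈ Ici (0 : ℝ),
      ∑ i, |x t i| ≤ Real.exp (∫ τ in (0 : ℝ)..t, hstar τ) * ∑ i, |x 0 i| := by
  haveI : Nonempty (Fin S) := Fin.pos_iff_nonempty.mp hS
  intro T hT
  rw [mem_Ici] at hT
  set g : ℝ → ℝ := fun s => ∑ i, |x s i| with hgdef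
  set A : ℝ → ℝ := fun s => ∫ τ in (0 : ℝ)..s, hstar τ with hAdef
  set F : ℝ → ℝ := fun s => Real.exp (-A s) * g s with hFdef
  -- continuity of x, g
  have hxC : ∀ i, ContinuousOn (fun s => x s i) (Ici (0:ℝ)) :=
    fun i s hs => (hx s hs i).continuousWithinAt
  have hgC : ContinuousOn g (Ici (0:ℝ)) :=
    continuousOn_finset_sum _ fun i _ => (hxC i).abs
  -- continuity of hstar
  have hstarC : ContinuousOn hstar (Ici (0:ℝ)) := by
    have heq : ∀ t : ℝ, hstar t =
        Finset.univ.sup' Finset.univ_nonempty (fun j => ∑ i, H t i j) := by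
      intro t
      rw [hhstar t, Finset.sup'_univ_eq_ciSup]
    rw [show hstar = fun t => Finset.univ.sup' Finset.univ_nonempty
        (fun j => ∑ i, H t i j) from funext heq]
    exact ContinuousOn.finset_sup'_apply Finset.univ_nonempty
      fun j _ => continuousOn_finset_sum _ fun i _ => hHcont i j
  -- column sums bounded by hstar
  have hcol : ∀ t : ℝ, ∀ j, ∑ i, H t i j ≤ hstar t := by
    intro t j
    rw [hhstar t]
    exact le_ciSup (f := fun j => ∑ i, H t i j) (Set.Finite.bddAbove (Set.finite_range _)) j
  -- interval integrability of hstar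
  have hInt : ∀ b : ℝ, 0 ≤ b → IntervalIntegrable hstar MeasureTheory.volume 0 b := by
    intro b hb
    apply ContinuousOn.intervalIntegrable
    apply hstarC.mono
    rw [uIcc_of_le hb]
    exact Icc_subset_Ici_self
  -- continuity of A on [0, T]
  have hAC : ContinuousOn A (Icc 0 T) := by
    have hIOn : MeasureTheory.IntegrableOn hstar (uIcc (0:ℝ) T) := by
      rw [uIcc_of_le hT]
      exact (hstarC.mono Icc_subset_Ici_self).integrableOn_Icc
    have := intervalIntegral.continuousOn_primitive_interval hIOn
    rwa [uIcc_of_le hT] at this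
  -- F is continuous on [0, T]
  have hFC : ContinuousOn F (Icc 0 T) :=
    (Real.continuous_exp.comp_continuousOn hAC.neg).mul (hgC.mono Icc_subset_Ici_self)
  -- F has a nonpositive right derivative at every point of [0, T)
  have key : ∀ τ ∈ Ico (0:ℝ) T, ∃ DF, HasDerivWithinAt F DF (Ici τ) τ ∧ DF ≤ 0 := by
    intro τ hτ
    have hτ0 : (0:ℝ) ≤ τ := hτ.1
    have hxd : ∀ i, HasDerivWithinAt (fun s => x s i) ((H τ).mulVec (x τ) i) (Ici τ) τ :=
      fun i => (hx τ hτ0 i).mono (Ici_subset_Ici.2 hτ0)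
    choose d hd hdpos hdneg hdzero using fun i => abs_hasDerivWithinAt_Ici_aux (hxd i)
    have hgd : HasDerivWithinAt g (∑ i, d i) (Ici τ) τ :=
      HasDerivWithinAt.fun_sum fun i _ => hd i
    have hAd : HasDerivWithinAt A (hstar τ) (Ici τ) τ := by
      apply intervalIntegral.integral_hasDerivWithinAt_right (hInt τ hτ0)
        ⟨Ici 0, mem_of_superset self_mem_nhdsWithin (fun z hz => le_trans hτ0 (le_of_lt hz)),
          hstarC.aestronglyMeasurable measurableSet_Ici⟩
      exact (hstarC τ hτ0).mono (fun z hz => le_trans hτ0 (le_of_lt hz))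
    have hexp : HasDerivWithinAt (fun s => Real.exp (-A s))
        (Real.exp (-A τ) * (-hstar τ)) (Ici τ) τ := hAd.neg.exp
    have hFd : HasDerivWithinAt F
        (Real.exp (-A τ) * (-hstar τ) * g τ + Real.exp (-A τ) * ∑ i, d i) (Ici τ) τ :=
      hexp.mul hgd
    refine ⟨_, hFd, ?_⟩
    have hdle : ∀ i, d i ≤ ∑ j, H τ i j * |x τ j| := by
      intro i
      have hmv : (H τ).mulVec (x τ) i = ∑ j, H τ i j * x τ j := by
        simp [Matrix.mulVec, dotProduct]
      rcases lt_trichotomy (x τ i) 0 with h | h | h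
      · rw [hdneg i h, hmv, ← Finset.sum_neg_distrib]
        apply Finset.sum_le_sum
        intro j _
        by_cases hji : j = i
        · subst hji
          rw [abs_of_neg h]
          exact le_of_eq (by ring)
        · have h0 : 0 ≤ H τ i j := hHess τ hτ0 i j (fun hij => hji hij.symm)
          calc -(H τ i j * x τ j) = H τ i j * (-x τ j) := by ring
          _ ≤ H τ i j * |x τ j| := mul_le_mul_of_nonneg_left (neg_le_abs _) h0
      · rw [hdzero i h, hmv]
        calc |∑ j, H τ i j * x τ j| ≤ ∑ j, |H τ i j * x τ j| :=
              Finset.abs_sum_le_sum_abs _ _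
        _ ≤ ∑ j, H τ i j * |x τ j| := by
            apply Finset.sum_le_sum
            intro j _
            by_cases hji : j = i
            · subst hji
              simp [h]
            · rw [abs_mul, abs_of_nonneg (hHess τ hτ0 i j (fun hij => hji hij.symm))]
      · rw [hdpos i h, hmv]
        apply Finset.sum_le_sum
        intro j _
        by_cases hji : j = i
        · subst hji
          rw [abs_of_pos h]
        · exact mul_le_mul_of_nonneg_left (le_abs_self _)
            (hHess τ hτ0 i j (fun hij => hji hij.symm))
    have hsum : ∑ i, d i ≤ hstar τ * g τ := by
      calc ∑ i, d i ≤ ∑ i, ∑ j, H τ i j * |x τ j| := Finset.sum_le_sum fun i _ => hdle i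
      _ = ∑ j, (∑ i, H τ i j) * |x τ j| := by
          rw [Finset.sum_comm]
          simp [Finset.sum_mul]
      _ ≤ ∑ j, hstar τ * |x τ j| := Finset.sum_le_sum fun j _ =>
          mul_le_mul_of_nonneg_right (hcol τ j) (abs_nonneg _)
      _ = hstar τ * g τ := by rw [← Finset.mul_sum]
    have hzero : Real.exp (-A τ) * (-hstar τ) * g τ
        + Real.exp (-A τ) * (hstar τ * g τ) = 0 := by ring
    linarith [mul_le_mul_of_nonneg_left hsum (Real.exp_pos (-A τ)).le]
  -- Grönwall
  have hslope : ∀ τ ∈ Ico (0:ℝ) T, ∀ r, (fun _ : ℝ => (0:ℝ)) τ < r →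
      ∃ᶠ z in nhdsWithin τ (Ioi τ), (z - τ)⁻¹ * (F z - F τ) < r := by
    intro τ hτ r hr
    obtain ⟨DF, hFd, hDF0⟩ := key τ hτ
    have htend := hasDerivWithinAt_iff_tendsto_slope.mp hFd
    rw [Ici_sdiff_left] at htend
    have hev := htend.eventually_lt_const (lt_of_le_of_lt hDF0 hr)
    refine (hev.mono ?_).frequently
    intro z hz
    rwa [slope_def_field, div_eq_inv_mul] at hz
  have hgron := le_gronwallBound_of_liminf_deriv_right_le (f := F)
    (f' := fun _ : ℝ => (0:ℝ)) (δ := F 0) (K := 0) (ε := 0) (a := 0) (b := T)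
    hFC hslope le_rfl (fun s _ => by simp)
  have hTle : F T ≤ F 0 := by
    simpa [gronwallBound_K0] using hgron T ⟨hT, le_rfl⟩
  have hF0 : F 0 = g 0 := by
    simp [hFdef, hAdef, intervalIntegral.integral_same]
  rw [hF0] at hTle
  have h2 : g T = Real.exp (A T) * (Real.exp (-A T) * g T) := by
    rw [← mul_assoc, ← Real.exp_add]
    simp
  calc (∑ i, |x T i|) = Real.exp (A T) * (Real.exp (-A T) * g T) := h2
  _ ≤ Real.exp (A T) * g 0 := mul_le_mul_of_nonneg_left hTle (Real.exp_pos _).le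
  _ = Real.exp (∫ τ in (0:ℝ)..T, hstar τ) * ∑ i, |x 0 i| := rfl
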